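/- For all integers m ≥ 3, n ≥ 3, k ≥ 2 with m − k ≥ 1, and every integer l with 2 ≤ l ≤ n−1, the signed generalized book graph (B(m,n,k),σ_l), where σ_l has negative edge set {v₁u₁ⁱ : 1 ≤ i ≤ l}, satisfies χ'(B(m,n,k),σ_l) = n+1. -/

import Mathlib

open scoped Classical

/-- The color set `M_q`: for `q = 2r`, `{±1, …, ±r}`; for `q = 2r+1`, `{0, ±1, …, ±r}`. -/
def colorSet (q : ℕ) : Set ℤ :=
  {c : ℤ | c.natAbs ≤ q / 2 ∧ (Even q → c ≠ 0)}

/-- A proper `q`-edge coloring of the signed graph `(G, σ)`, given as an assignment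
`γ v w` of a color to the incidence `(v, vw)`. -/
def IsProperSignedEdgeColoring {V : Type*} (G : SimpleGraph V)
    (σ : Sym2 V → ℤˣ) (q : ℕ) (γ : V → V → ℤ) : Prop :=
  (∀ ⦃v w : V⦄, G.Adj v w → γ v w ∈ colorSet q) ∧
  (∀ ⦃v w : V⦄, G.Adj v w → γ v w = (-(σ s(v, w) : ℤ)) * γ w v) ∧
  (∀ ⦃v w₁ w₂ : V⦄, G.Adj v w₁ → G.Adj v w₂ → w₁ ≠ w₂ → γ v w₁ ≠ γ v w₂)

/-- The chromatic index of a signed graph: the least `q` admitting a proper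
`q`-edge coloring. -/
noncomputable def signedChromaticIndex {V : Type*} (G : SimpleGraph V)
    (σ : Sym2 V → ℤˣ) : ℕ :=
  sInf {q : ℕ | ∃ γ : V → V → ℤ, IsProperSignedEdgeColoring G σ q γ}

/-- Vertices of the generalized book graph `B(m,n,k)`: the spine path `v₁ … v_k`
(`Sum.inl`) together with the internal vertices `u_j^i` of the `n` pages (`Sum.inr`). -/
abbrev BookVertex (m n k : ℕ) : Type := Fin k ⊕ Fin n × Fin (m - k)

/-- The generalized book graph `B(m,n,k)`: `n` cycles of length `m` sharing the
common path `v₁ v₂ ⋯ v_k`, the `i`-th cycle being `v₁ u₁ⁱ u₂ⁱ ⋯ u_{m-k}ⁱ v_k ⋯ v₂ v₁`. -/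
def bookGraph (m n k : ℕ) : SimpleGraph (BookVertex m n k) :=
  SimpleGraph.fromRel (fun x y =>
    match x, y with
    | Sum.inl a, Sum.inl b => (b : ℕ) = (a : ℕ) + 1
    | Sum.inl a, Sum.inr p =>
        ((a : ℕ) = 0 ∧ (p.2 : ℕ) = 0) ∨ ((a : ℕ) = k - 1 ∧ (p.2 : ℕ) = m - k - 1)
    | Sum.inr p, Sum.inr p' => p.1 = p'.1 ∧ (p'.2 : ℕ) = (p.2 : ℕ) + 1
    | Sum.inr _, Sum.inl _ => False)

/-- The signature `σ_l` on `B(m,n,k)` whose negative edges are exactly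
`v₁u₁ⁱ` for `1 ≤ i ≤ l`. -/
noncomputable def bookSigma (m n k l : ℕ) (hk : 0 < k) (hmk : 0 < m - k) :
    Sym2 (BookVertex m n k) → ℤˣ :=
  fun e =>
    if ∃ i : Fin n, (i : ℕ) < l ∧
        e = s(Sum.inl (⟨0, hk⟩ : Fin k),
              Sum.inr ((i, ⟨0, hmk⟩) : Fin n × Fin (m - k)))
    then -1 else 1

/-! ### Auxiliary color machinery -/

/-- enumeration of colors: `0, 1, -1, 2, -2, …` -/
def fcol (j : ℕ) : ℤ := if j % 2 = 0 then -((j / 2 : ℕ) : ℤ) else ((j / 2 : ℕ) + 1 : ℤ)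

lemma fcol_inj {i j : ℕ} (h : fcol i = fcol j) : i = j := by
  unfold fcol at h; split_ifs at h <;> omega

lemma fcol_eq_zero {j : ℕ} : fcol j = 0 ↔ j = 0 := by
  unfold fcol; split_ifs <;> omega

lemma fcol_natAbs (j : ℕ) : (fcol j).natAbs = (j + 1) / 2 := by
  unfold fcol; split_ifs <;> omega

/-- the `j`-th color of `M_{n+1}` -/
def ecol (n j : ℕ) : ℤ := fcol (j + n % 2)

lemma ecol_inj {n i j : ℕ} (h : ecol n i = ecol n j) : i = j := by
  have := fcol_inj h; omega

lemma ecol_ne_zero {n j : ℕ} (h : 1 ≤ j) : ecol n j ≠ 0 := by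
  unfold ecol
  intro h0
  rw [fcol_eq_zero] at h0; omega

lemma colorSet_mem {q : ℕ} {c : ℤ} (h1 : c.natAbs ≤ q / 2) (h2 : q % 2 = 0 → c ≠ 0) :
    c ∈ colorSet q := ⟨h1, fun he => h2 (Nat.even_iff.mp he)⟩

lemma ecol_mem {n j : ℕ} (h : j ≤ n) : ecol n j ∈ colorSet (n + 1) := by
  refine colorSet_mem ?_ ?_
  · have := fcol_natAbs (j + n % 2); unfold ecol; omega
  · intro he h0
    unfold ecol at h0
    rw [fcol_eq_zero] at h0; omega

lemma colorSet_neg {q : ℕ} {c : ℤ} (h : c ∈ colorSet q) : -c ∈ colorSet q := by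
  obtain ⟨h1, h2⟩ := h
  exact ⟨by simpa using h1, fun he => by simpa using h2 he⟩

/-- cyclic shift on `{0, …, l-1}`, identity above `l` -/
def bshift (l i : ℕ) : ℕ := if i < l then (i + 1) % l else i

lemma bshift_lt_l {l i : ℕ} (hl : 1 ≤ l) (h : i < l) : bshift l i < l := by
  unfold bshift; rw [if_pos h]; exact Nat.mod_lt _ (by omega)

lemma bshift_lt {n l i : ℕ} (hl : 1 ≤ l) (hln : l ≤ n) (h : i < n) : bshift l i < n := by
  by_cases hi : i < l
  · have := bshift_lt_l hl hi; omega
  · unfold bshift; rw [if_neg hi]; omega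

lemma mod_aux {l i : ℕ} (h : i < l) : (i + 1) % l = if i + 1 = l then 0 else i + 1 := by
  split_ifs with h'
  · rw [h', Nat.mod_self]
  · exact Nat.mod_eq_of_lt (by omega)

lemma bshift_ne {l i : ℕ} (hl : 2 ≤ l) (h : i < l) : bshift l i ≠ i := by
  unfold bshift; rw [if_pos h, mod_aux h]; split_ifs <;> omega

lemma bshift_id {l i : ℕ} (h : ¬ i < l) : bshift l i = i := if_neg h

lemma bshift_inj {l i j : ℕ} (hl : 1 ≤ l) (h : bshift l i = bshift l j) : i = j := by
  by_cases hi : i < l <;> by_cases hj : j < l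
  · rw [bshift, if_pos hi, mod_aux hi] at h
    rw [bshift, if_pos hj, mod_aux hj] at h
    split_ifs at h <;> omega
  · have := bshift_lt_l hl hi; rw [bshift_id hj] at h; omega
  · have := bshift_lt_l hl hj; rw [bshift_id hi] at h; omega
  · rwa [bshift_id hi, bshift_id hj] at h

/-- pick a color distinct from `B` and `C` among `{1, -1, 2}` -/
def xpick (B C : ℤ) : ℤ :=
  if B ≠ 1 ∧ C ≠ 1 then 1 else if B ≠ -1 ∧ C ≠ -1 then -1 else 2

lemma xpick_ne_fst (B C : ℤ) : xpick B C ≠ B := by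
  unfold xpick; split_ifs <;> omega

lemma xpick_ne_snd (B C : ℤ) : xpick B C ≠ C := by
  unfold xpick; split_ifs <;> omega

lemma xpick_ne_zero (B C : ℤ) : xpick B C ≠ 0 := by
  unfold xpick; split_ifs <;> omega

lemma xpick_natAbs (B C : ℤ) : (xpick B C).natAbs ≤ 2 := by
  unfold xpick; split_ifs <;> simp

lemma xpick_mem {n : ℕ} (hn : 3 ≤ n) (B C : ℤ) : xpick B C ∈ colorSet (n + 1) := by
  refine colorSet_mem ?_ (fun _ => xpick_ne_zero B C)
  have := xpick_natAbs B C; omega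

/-! ### The explicit coloring -/

/-- color at `u₁ⁱ` towards `v₁` -/
def Bfun (n l i : ℕ) : ℤ := if i < l then ecol n i else -ecol n i

/-- color at `v_k` towards `u_{m-k}ⁱ` -/
def Cfun (n l i : ℕ) : ℤ := -ecol n (bshift l i)

/-- color used along the interior of page `i` -/
def xfun (n l i : ℕ) : ℤ := xpick (Bfun n l i) (Cfun n l i)

/-- the explicit proper `(n+1)`-edge coloring of `(B(m,n,k), σ_l)` -/
def bookColoring (m n k l : ℕ) : BookVertex m n k → BookVertex m n k → ℤ
  | Sum.inl a, Sum.inl b => if (a : ℕ) < (b : ℕ) then ecol n n else -ecol n n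
  | Sum.inl a, Sum.inr p => if (a : ℕ) = 0 then ecol n p.1 else Cfun n l p.1
  | Sum.inr p, Sum.inl a => if (a : ℕ) = 0 then Bfun n l p.1 else -Cfun n l p.1
  | Sum.inr p, Sum.inr p' => if (p.2 : ℕ) < (p'.2 : ℕ) then xfun n l p.1 else -xfun n l p.1

/-! ### Adjacency in the book graph -/

lemma book_adj_ll {m n k : ℕ} {a b : Fin k}
    (h : (bookGraph m n k).Adj (.inl a) (.inl b)) :
    (b : ℕ) = a + 1 ∨ (a : ℕ) = b + 1 := by
  have h' := h; simp only [bookGraph, SimpleGraph.fromRel_adj] at h'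
  tauto

lemma book_adj_lr {m n k : ℕ} {a : Fin k} {p : Fin n × Fin (m - k)}
    (h : (bookGraph m n k).Adj (.inl a) (.inr p)) :
    ((a : ℕ) = 0 ∧ (p.2 : ℕ) = 0) ∨ ((a : ℕ) = k - 1 ∧ (p.2 : ℕ) = m - k - 1) := by
  have h' := h; simp only [bookGraph, SimpleGraph.fromRel_adj] at h'
  tauto

lemma book_adj_rr {m n k : ℕ} {p p' : Fin n × Fin (m - k)}
    (h : (bookGraph m n k).Adj (.inr p) (.inr p')) :
    p.1 = p'.1 ∧ ((p'.2 : ℕ) = p.2 + 1 ∨ (p.2 : ℕ) = p'.2 + 1) := by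
  have h' := h; simp only [bookGraph, SimpleGraph.fromRel_adj] at h'
  obtain ⟨-, hr | hr⟩ := h'
  · exact ⟨hr.1, Or.inl hr.2⟩
  · exact ⟨hr.1.symm, Or.inr hr.2⟩

/-! ### Computing the signature on edges -/

lemma sigma_spine (m n k l : ℕ) (hk0 : 0 < k) (hmk0 : 0 < m - k) (a b : Fin k) :
    bookSigma m n k l hk0 hmk0 s(Sum.inl a, Sum.inl b) = 1 := by
  unfold bookSigma
  rw [if_neg]
  rintro ⟨i, -, h⟩
  rw [Sym2.eq_iff] at h
  rcases h with ⟨-, h⟩ | ⟨h, -⟩ <;> exact absurd h (by simp)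

lemma sigma_page (m n k l : ℕ) (hk0 : 0 < k) (hmk0 : 0 < m - k)
    (p p' : Fin n × Fin (m - k)) :
    bookSigma m n k l hk0 hmk0 s(Sum.inr p, Sum.inr p') = 1 := by
  unfold bookSigma
  rw [if_neg]
  rintro ⟨i, -, h⟩
  rw [Sym2.eq_iff] at h
  rcases h with ⟨h, -⟩ | ⟨-, h⟩ <;> exact absurd h (by simp)

lemma sigma_mixed (m n k l : ℕ) (hk0 : 0 < k) (hmk0 : 0 < m - k)
    (a : Fin k) (p : Fin n × Fin (m - k)) :
    bookSigma m n k l hk0 hmk0 s(Sum.inl a, Sum.inr p) =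
      if (a : ℕ) = 0 ∧ (p.2 : ℕ) = 0 ∧ (p.1 : ℕ) < l then -1 else 1 := by
  unfold bookSigma
  by_cases h : (a : ℕ) = 0 ∧ (p.2 : ℕ) = 0 ∧ (p.1 : ℕ) < l
  · rw [if_pos h, if_pos]
    refine ⟨p.1, h.2.2, ?_⟩
    have ha : a = ⟨0, hk0⟩ := Fin.ext h.1
    have hp : p = (p.1, ⟨0, hmk0⟩) := Prod.ext rfl (Fin.ext h.2.1)
    rw [ha, hp]
  · rw [if_neg h, if_neg]
    rintro ⟨i, hi, he⟩
    rw [Sym2.eq_iff] at he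
    rcases he with ⟨h1, h2⟩ | ⟨h1, -⟩
    · apply h
      obtain ⟨rfl⟩ := Sum.inl.inj h1
      have := Sum.inr.inj h2
      refine ⟨rfl, ?_, ?_⟩
      · rw [this]
      · rw [this]; exact hi
    · exact absurd h1 (by simp)

/-! ### The coloring is proper -/

lemma book_coloring_proper (m n k l : ℕ) (hm : 3 ≤ m) (hn : 3 ≤ n) (hk : 2 ≤ k)
    (hmk : 1 ≤ m - k) (hl₁ : 2 ≤ l) (hl₂ : l ≤ n - 1) (hk0 : 0 < k) (hmk0 : 0 < m - k) :
    IsProperSignedEdgeColoring (bookGraph m n k) (bookSigma m n k l hk0 hmk0) (n + 1)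
      (bookColoring m n k l) := by
  have hln : l ≤ n := by omega
  have hl1 : 1 ≤ l := by omega
  refine ⟨?_, ?_, ?_⟩
  · -- colors lie in the color set
    rintro (a | p) (b | p') -
    · simp only [bookColoring]
      split_ifs
      · exact ecol_mem le_rfl
      · exact colorSet_neg (ecol_mem le_rfl)
    · simp only [bookColoring, Cfun]
      split_ifs
      · exact ecol_mem (le_of_lt p'.1.isLt)
      · exact colorSet_neg (ecol_mem (le_of_lt (bshift_lt hl1 hln p'.1.isLt)))
    · simp only [bookColoring, Bfun, Cfun]
      split_ifs
      · exact ecol_mem (le_of_lt p.1.isLt)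
      · exact colorSet_neg (ecol_mem (le_of_lt p.1.isLt))
      · exact colorSet_neg (colorSet_neg (ecol_mem (le_of_lt (bshift_lt hl1 hln p.1.isLt))))
    · simp only [bookColoring, xfun]
      split_ifs
      · exact xpick_mem hn _ _
      · exact colorSet_neg (xpick_mem hn _ _)
  · -- sign condition
    rintro (a | p) (b | p') hadj
    · rw [sigma_spine]
      have hne : (a : ℕ) ≠ (b : ℕ) := fun h => hadj.ne (congrArg Sum.inl (Fin.ext h))
      simp only [Units.val_one, bookColoring]
      split_ifs <;> omega
    · rw [sigma_mixed]
      have h2 := book_adj_lr hadj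
      simp only [bookColoring]
      by_cases hc : (a : ℕ) = 0 ∧ (p'.2 : ℕ) = 0 ∧ (p'.1 : ℕ) < l
      · rw [if_pos hc]
        simp only [Units.val_neg, Units.val_one]
        rw [if_pos hc.1, if_pos hc.1]
        unfold Bfun; rw [if_pos hc.2.2]; ring
      · rw [if_neg hc]
        simp only [Units.val_one]
        rcases h2 with ⟨ha, hj⟩ | ⟨ha, hj⟩
        · rw [if_pos ha, if_pos ha]
          unfold Bfun
          rw [if_neg (fun hil => hc ⟨ha, hj, hil⟩)]
          ring
        · have ha0 : ¬ (a : ℕ) = 0 := by omega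
          rw [if_neg ha0, if_neg ha0]; ring
    · rw [show (s(Sum.inr p, Sum.inl b) : Sym2 (BookVertex m n k)) = s(Sum.inl b, Sum.inr p)
          from Sym2.eq_swap]
      rw [sigma_mixed]
      have h2 := book_adj_lr hadj.symm
      simp only [bookColoring]
      by_cases hc : (b : ℕ) = 0 ∧ (p.2 : ℕ) = 0 ∧ (p.1 : ℕ) < l
      · rw [if_pos hc]
        simp only [Units.val_neg, Units.val_one]
        rw [if_pos hc.1, if_pos hc.1]
        unfold Bfun; rw [if_pos hc.2.2]; ring
      · rw [if_neg hc]
        simp only [Units.val_one]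
        rcases h2 with ⟨ha, hj⟩ | ⟨ha, hj⟩
        · rw [if_pos ha, if_pos ha]
          unfold Bfun
          rw [if_neg (fun hil => hc ⟨ha, hj, hil⟩)]
          ring
        · have ha0 : ¬ (b : ℕ) = 0 := by omega
          rw [if_neg ha0, if_neg ha0]; ring
    · rw [sigma_page]
      obtain ⟨h1, h2⟩ := book_adj_rr hadj
      simp only [Units.val_one, bookColoring]
      rw [h1]
      split_ifs <;> omega
  · -- distinctness at each vertex
    rintro (a | p) (w₁ | p₁) (w₂ | p₂) h1 h2 hne
    · -- v = inl a, both neighbours on the spine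
      have hb := book_adj_ll h1
      have hc' := book_adj_ll h2
      have hbc : (w₁ : ℕ) ≠ (w₂ : ℕ) := fun h => hne (congrArg Sum.inl (Fin.ext h))
      have hz : ecol n n ≠ 0 := ecol_ne_zero (by omega)
      simp only [bookColoring]
      split_ifs <;> omega
    · -- v = inl a, spine neighbour and page neighbour
      have hb := book_adj_ll h1
      have hc' := book_adj_lr h2
      have hz : ecol n n ≠ 0 := ecol_ne_zero (by omega)
      have hi1 : ecol n (p₂.1 : ℕ) ≠ ecol n n :=
        fun h => absurd (ecol_inj h) (by have := p₂.1.isLt; omega)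
      have hi2 : ecol n (bshift l (p₂.1 : ℕ)) ≠ ecol n n :=
        fun h => absurd (ecol_inj h) (by have := bshift_lt hl1 hln p₂.1.isLt; omega)
      have hwlt := w₁.isLt
      simp only [bookColoring, Cfun]
      split_ifs <;> omega
    · -- symmetric version
      have hb := book_adj_lr h1
      have hc' := book_adj_ll h2
      have hz : ecol n n ≠ 0 := ecol_ne_zero (by omega)
      have hi1 : ecol n (p₁.1 : ℕ) ≠ ecol n n :=
        fun h => absurd (ecol_inj h) (by have := p₁.1.isLt; omega)
      have hi2 : ecol n (bshift l (p₁.1 : ℕ)) ≠ ecol n n :=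
        fun h => absurd (ecol_inj h) (by have := bshift_lt hl1 hln p₁.1.isLt; omega)
      have hwlt := w₂.isLt
      simp only [bookColoring, Cfun]
      split_ifs <;> omega
    · -- v = inl a, two page neighbours
      have hb := book_adj_lr h1
      have hc' := book_adj_lr h2
      have hii : (p₁.1 : ℕ) ≠ (p₂.1 : ℕ) := by
        intro h
        apply hne
        have hj : (p₁.2 : ℕ) = (p₂.2 : ℕ) := by
          rcases hb with ⟨ha, hj1⟩ | ⟨ha, hj1⟩ <;> rcases hc' with ⟨ha', hj2⟩ | ⟨ha', hj2⟩ <;>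
            omega
        exact congrArg Sum.inr (Prod.ext (Fin.ext h) (Fin.ext hj))
      have he1 : ecol n (p₁.1 : ℕ) ≠ ecol n (p₂.1 : ℕ) := fun h => hii (ecol_inj h)
      have he2 : ecol n (bshift l (p₁.1 : ℕ)) ≠ ecol n (bshift l (p₂.1 : ℕ)) :=
        fun h => hii (bshift_inj hl1 (ecol_inj h))
      simp only [bookColoring, Cfun]
      split_ifs <;> omega
    · -- v = inr p, two spine neighbours (only possible if m - k = 1)
      have hb := book_adj_lr h1.symm
      have hc' := book_adj_lr h2.symm
      have hbc : (w₁ : ℕ) ≠ (w₂ : ℕ) := fun h => hne (congrArg Sum.inl (Fin.ext h))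
      by_cases hil : (p.1 : ℕ) < l
      · have key : ecol n (bshift l (p.1 : ℕ)) ≠ ecol n (p.1 : ℕ) :=
          fun h => bshift_ne hl₁ hil (ecol_inj h)
        simp only [bookColoring, Bfun, Cfun]
        split_ifs <;> omega
      · have hz : ecol n (p.1 : ℕ) ≠ 0 := ecol_ne_zero (by omega)
        have hbs : bshift l (p.1 : ℕ) = (p.1 : ℕ) := bshift_id hil
        simp only [bookColoring, Bfun, Cfun, hbs]
        split_ifs <;> omega
    · -- v = inr p, spine neighbour and page neighbour
      have hb := book_adj_lr h1.symm
      have hc' := book_adj_rr h2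
      have hxB := xpick_ne_fst (Bfun n l (p.1 : ℕ)) (Cfun n l (p.1 : ℕ))
      have hxC := xpick_ne_snd (Bfun n l (p.1 : ℕ)) (Cfun n l (p.1 : ℕ))
      have hlt1 := p.2.isLt
      have hlt2 := p₂.2.isLt
      simp only [bookColoring, xfun]
      split_ifs <;> omega
    · -- symmetric version
      have hb := book_adj_rr h1
      have hc' := book_adj_lr h2.symm
      have hxB := xpick_ne_fst (Bfun n l (p.1 : ℕ)) (Cfun n l (p.1 : ℕ))
      have hxC := xpick_ne_snd (Bfun n l (p.1 : ℕ)) (Cfun n l (p.1 : ℕ))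
      have hlt1 := p.2.isLt
      have hlt2 := p₁.2.isLt
      simp only [bookColoring, xfun]
      split_ifs <;> omega
    · -- v = inr p, two page neighbours
      obtain ⟨hb1, hb2⟩ := book_adj_rr h1
      obtain ⟨hc1, hc2⟩ := book_adj_rr h2
      have hx0 := xpick_ne_zero (Bfun n l (p.1 : ℕ)) (Cfun n l (p.1 : ℕ))
      have hjj : (p₁.2 : ℕ) ≠ (p₂.2 : ℕ) := by
        intro h
        apply hne
        exact congrArg Sum.inr (Prod.ext (hb1.symm.trans hc1) (Fin.ext h))
      simp only [bookColoring, xfun]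
      split_ifs <;> omega

/-! ### Lower bound: counting colors at the vertex `v₁` -/

lemma colorFinset_card (q : ℕ) :
    ∃ F : Finset ℤ, F.card ≤ q ∧ ∀ c ∈ colorSet q, c ∈ F := by
  by_cases hpar : q % 2 = 0
  · refine ⟨(Finset.Icc (-(q / 2 : ℕ) : ℤ) ((q / 2 : ℕ) : ℤ)).erase 0, ?_, ?_⟩
    · have h0 : (0 : ℤ) ∈ Finset.Icc (-(q / 2 : ℕ) : ℤ) ((q / 2 : ℕ) : ℤ) := by
        rw [Finset.mem_Icc]; omega
      rw [Finset.card_erase_of_mem h0, Int.card_Icc]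
      omega
    · rintro c ⟨h1, h2⟩
      rw [Finset.mem_erase, Finset.mem_Icc]
      exact ⟨h2 (Nat.even_iff.mpr hpar), by omega, by omega⟩
  · refine ⟨Finset.Icc (-(q / 2 : ℕ) : ℤ) ((q / 2 : ℕ) : ℤ), ?_, ?_⟩
    · rw [Int.card_Icc]; omega
    · rintro c ⟨h1, -⟩
      rw [Finset.mem_Icc]; omega

/-- For all `m ≥ 3`, `n ≥ 3`, `k ≥ 2` with `m - k ≥ 1` and every
`2 ≤ l ≤ n - 1`, the signed generalized book graph `(B(m,n,k), σ_l)`, whose negative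
edges are exactly `v₁u₁ⁱ` for `1 ≤ i ≤ l`, has chromatic index `n + 1`. -/
theorem book_chromatic_index_sigma_l (m n k l : ℕ) (hm : 3 ≤ m) (hn : 3 ≤ n)
    (hk : 2 ≤ k) (hmk : 1 ≤ m - k) (hl₁ : 2 ≤ l) (hl₂ : l ≤ n - 1) :
    signedChromaticIndex (bookGraph m n k)
      (bookSigma m n k l (by omega) (by omega)) = n + 1 := by
  have hk0 : 0 < k := by omega
  have hmk0 : 0 < m - k := by omega
  have hmem : (n + 1) ∈ {q : ℕ | ∃ γ : BookVertex m n k → BookVertex m n k → ℤ,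
      IsProperSignedEdgeColoring (bookGraph m n k) (bookSigma m n k l (by omega) (by omega)) q γ} :=
    ⟨bookColoring m n k l, book_coloring_proper m n k l hm hn hk hmk hl₁ hl₂ hk0 hmk0⟩
  refine le_antisymm (Nat.sInf_le hmem) (le_csInf ⟨n + 1, hmem⟩ ?_)
  rintro q ⟨γ, hcol, -, hdist⟩
  by_contra hq
  push_neg at hq
  -- the n+1 neighbours of v₁
  set v₀ : BookVertex m n k := Sum.inl ⟨0, hk0⟩ with hv₀
  set W : Fin (n + 1) → BookVertex m n k := fun t =>
    if h : (t : ℕ) < n then Sum.inr (⟨t, h⟩, ⟨0, hmk0⟩) else Sum.inl ⟨1, by omega⟩ with hW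
  have hadjW : ∀ t, (bookGraph m n k).Adj v₀ (W t) := by
    intro t
    show (bookGraph m n k).Adj v₀
      (if h : (t : ℕ) < n then Sum.inr (⟨t, h⟩, ⟨0, hmk0⟩) else Sum.inl ⟨1, by omega⟩)
    by_cases h : (t : ℕ) < n
    · rw [dif_pos h, bookGraph, SimpleGraph.fromRel_adj]
      exact ⟨by simp, Or.inl (Or.inl ⟨rfl, rfl⟩)⟩
    · rw [dif_neg h, bookGraph, SimpleGraph.fromRel_adj]
      exact ⟨by rw [hv₀]; simp [Fin.ext_iff], Or.inl rfl⟩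
  have hWinj : Function.Injective W := by
    intro t₁ t₂ h
    have h' : (if h : (t₁ : ℕ) < n then
          (Sum.inr (⟨t₁, h⟩, ⟨0, hmk0⟩) : BookVertex m n k) else Sum.inl ⟨1, by omega⟩) =
        (if h : (t₂ : ℕ) < n then Sum.inr (⟨t₂, h⟩, ⟨0, hmk0⟩) else Sum.inl ⟨1, by omega⟩) := h
    by_cases h1 : (t₁ : ℕ) < n <;> by_cases h2 : (t₂ : ℕ) < n
    · rw [dif_pos h1, dif_pos h2] at h'
      have := congrArg Prod.fst (Sum.inr.inj h')
      simp only [Fin.mk.injEq] at this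
      exact Fin.ext this
    · rw [dif_pos h1, dif_neg h2] at h'
      exact absurd h' (by simp)
    · rw [dif_neg h1, dif_pos h2] at h'
      exact absurd h' (by simp)
    · have ht1 := t₁.isLt
      have ht2 := t₂.isLt
      exact Fin.ext (by omega)
  obtain ⟨F, hFcard, hFmem⟩ := colorFinset_card q
  have hinj : Set.InjOn (fun t => γ v₀ (W t)) (Finset.univ : Finset (Fin (n + 1))) := by
    rintro t₁ - t₂ - h
    by_contra hne
    exact hdist (hadjW t₁) (hadjW t₂) (fun hw => hne (hWinj hw)) h
  have hcard := Finset.card_le_card_of_injOn (fun t => γ v₀ (W t))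
    (fun t _ => hFmem _ (hcol (hadjW t))) hinj
  simp only [Finset.card_univ, Fintype.card_fin] at hcard
  omega
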